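/- Let ρ_AB = ρ_BC = ρ_AC = p|00⟩⟨00| + (1−p)|a,a⟩⟨a,a| with |a⟩ = (|0⟩+|1⟩)/√2 and 0 < p < 1. Then the only tripartite density matrix on (C^2)^{⊗3} whose three bipartite reductions all equal this state is ρ_ABC = p|000⟩⟨000| + (1−p)|a,a,a⟩⟨a,a,a|; in particular the (separable, non-classical) reductions are compatible with a unique global state, which is fully separable. -/

import Mathlib

open Matrix BigOperators
open scoped Kronecker ComplexOrder

namespace QMarginal

abbrev Mat (n : ℕ) := Matrix (Fin n) (Fin n) ℂ
abbrev Bip (m n : ℕ) := Matrix (Fin m × Fin n) (Fin m × Fin n) ℂ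
abbrev Tri (dA dB dC : ℕ) := Matrix (Fin dA × Fin dB × Fin dC) (Fin dA × Fin dB × Fin dC) ℂ

/-- partial trace over the third system -/
noncomputable def trC {dA dB dC : ℕ} (ρ : Tri dA dB dC) : Bip dA dB :=
  fun x y => ∑ c : Fin dC, ρ (x.1, x.2, c) (y.1, y.2, c)

/-- partial trace over the second system -/
noncomputable def trB {dA dB dC : ℕ} (ρ : Tri dA dB dC) : Bip dA dC :=
  fun x y => ∑ b : Fin dB, ρ (x.1, b, x.2) (y.1, b, y.2)

/-- partial trace over the first system -/
noncomputable def trA {dA dB dC : ℕ} (ρ : Tri dA dB dC) : Bip dB dC :=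
  fun x y => ∑ a : Fin dA, ρ (a, x.1, x.2) (a, y.1, y.2)

/-- partial trace of a bipartite matrix over the right factor -/
noncomputable def trR {m n : ℕ} (ρ : Bip m n) : Mat m :=
  fun i j => ∑ b : Fin n, ρ (i, b) (j, b)

/-- partial trace of a bipartite matrix over the left factor -/
noncomputable def trL {m n : ℕ} (ρ : Bip m n) : Mat n :=
  fun i j => ∑ a : Fin m, ρ (a, i) (a, j)

def IsDensity {ι : Type*} [Fintype ι] [DecidableEq ι] (ρ : Matrix ι ι ℂ) : Prop :=
  ρ.PosSemidef ∧ ρ.trace = 1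

/-- rank-one projector onto a vector -/
def projV {ι : Type*} (v : ι → ℂ) : Matrix ι ι ℂ := fun i j => v i * star (v j)

def prod2 {m n : ℕ} (v : Fin m → ℂ) (w : Fin n → ℂ) : Fin m × Fin n → ℂ :=
  fun x => v x.1 * w x.2

def prod3 {dA dB dC : ℕ} (u : Fin dA → ℂ) (v : Fin dB → ℂ) (w : Fin dC → ℂ) :
    Fin dA × Fin dB × Fin dC → ℂ :=
  fun x => u x.1 * v x.2.1 * w x.2.2

/-- a family of vectors forming an orthonormal basis -/
def ONB {n : ℕ} (a : Fin n → Fin n → ℂ) : Prop :=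
  ∀ i j, (∑ k, star (a i k) * a j k) = if i = j then (1:ℂ) else 0

/-- fully classical bipartite state -/
def FullyClassical {m n : ℕ} (ρ : Bip m n) : Prop :=
  ∃ (a : Fin m → Fin m → ℂ) (b : Fin n → Fin n → ℂ) (p : Fin m → Fin n → ℝ),
    ONB a ∧ ONB b ∧ (∀ i j, 0 ≤ p i j) ∧
    ρ = ∑ i, ∑ j, (p i j) • projV (prod2 (a i) (b j))

/-- fully classical tripartite state -/
def FullyClassicalTri {dA dB dC : ℕ} (ρ : Tri dA dB dC) : Prop :=
  ∃ (a : Fin dA → Fin dA → ℂ) (b : Fin dB → Fin dB → ℂ) (c : Fin dC → Fin dC → ℂ)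
    (f : Fin dA → Fin dB → Fin dC → ℝ),
    ONB a ∧ ONB b ∧ ONB c ∧ (∀ i j k, 0 ≤ f i j k) ∧
    ρ = ∑ i, ∑ j, ∑ k, (f i j k) • projV (prod3 (a i) (b j) (c k))

/-- fully separable tripartite state -/
def FullySepTri {dA dB dC : ℕ} (ρ : Tri dA dB dC) : Prop :=
  ∃ (N : ℕ) (p : Fin N → ℝ) (u : Fin N → Fin dA → ℂ) (v : Fin N → Fin dB → ℂ)
    (w : Fin N → Fin dC → ℂ),
    (∀ i, 0 ≤ p i) ∧ ρ = ∑ i, (p i) • projV (prod3 (u i) (v i) (w i))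

/-- M ⊗ I_C on the tripartite space, M acting on A ⊗ B -/
def embAB {dA dB : ℕ} (M : Bip dA dB) (dC : ℕ) : Tri dA dB dC :=
  fun x y => M (x.1, x.2.1) (y.1, y.2.1) * (if x.2.2 = y.2.2 then 1 else 0)

/-- M ⊗ I_B on the tripartite space, M acting on A ⊗ C -/
def embAC {dA dC : ℕ} (M : Bip dA dC) (dB : ℕ) : Tri dA dB dC :=
  fun x y => M (x.1, x.2.2) (y.1, y.2.2) * (if x.2.1 = y.2.1 then 1 else 0)

/-- M ⊗ I_A on the tripartite space, M acting on B ⊗ C -/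
def embBC {dB dC : ℕ} (M : Bip dB dC) (dA : ℕ) : Tri dA dB dC :=
  fun x y => M (x.2.1, x.2.2) (y.2.1, y.2.2) * (if x.1 = y.1 then 1 else 0)

noncomputable def aVec : Fin 2 → ℂ := fun _ => (((Real.sqrt 2)⁻¹ : ℝ) : ℂ)

def e0 : Fin 2 → ℂ := fun i => if i = 0 then 1 else 0

/-- the common bipartite marginal p|00⟩⟨00| + (1−p)|a,a⟩⟨a,a| -/
noncomputable def ρmarg (p : ℝ) : Bip 2 2 :=
  p • projV (prod2 e0 e0) + (1 - p) • projV (prod2 aVec aVec)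

/-- the global state p|000⟩⟨000| + (1−p)|a,a,a⟩⟨a,a,a| -/
noncomputable def ρglob (p : ℝ) : Tri 2 2 2 :=
  p • projV (prod3 e0 e0 e0) + (1 - p) • projV (prod3 aVec aVec aVec)


/-! ### Auxiliary lemmas -/

lemma rr : ((Real.sqrt 2)⁻¹) * ((Real.sqrt 2)⁻¹) = 1/2 := by
  rw [← mul_inv, Real.mul_self_sqrt (by norm_num : (0:ℝ) ≤ 2)]; norm_num

lemma rr8 : (Real.sqrt 2)⁻¹ * (Real.sqrt 2)⁻¹ * (Real.sqrt 2)⁻¹ *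
    ((Real.sqrt 2)⁻¹ * (Real.sqrt 2)⁻¹ * (Real.sqrt 2)⁻¹) = 1/8 := by
  linear_combination ((Real.sqrt 2)⁻¹^4 + (Real.sqrt 2)⁻¹^2/2 + 1/4) * rr

lemma rr4 : (Real.sqrt 2)⁻¹ * (Real.sqrt 2)⁻¹ * ((Real.sqrt 2)⁻¹ * (Real.sqrt 2)⁻¹) = 1/4 := by
  linear_combination ((Real.sqrt 2)⁻¹^2 + 1/2) * rr

lemma prod3_e0 (y : Fin 2 × Fin 2 × Fin 2) :
    prod3 e0 e0 e0 y = if y = (0,0,0) then 1 else 0 := by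
  obtain ⟨i,j,k⟩ := y
  fin_cases i <;> fin_cases j <;> fin_cases k <;> simp [prod3, e0, Prod.ext_iff]

lemma prod2_e0 (y : Fin 2 × Fin 2) :
    prod2 e0 e0 y = if y = (0,0) then 1 else 0 := by
  obtain ⟨i,j⟩ := y
  fin_cases i <;> fin_cases j <;> simp [prod2, e0, Prod.ext_iff]

lemma prod3_a_mul (x y : Fin 2 × Fin 2 × Fin 2) :
    prod3 aVec aVec aVec x * star (prod3 aVec aVec aVec y) = 1/8 := by
  simp only [prod3, aVec, ← Complex.ofReal_mul, Complex.star_def, Complex.conj_ofReal]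
  norm_cast
  rw [rr8]; norm_num

lemma prod2_a_mul (x y : Fin 2 × Fin 2) :
    prod2 aVec aVec x * star (prod2 aVec aVec y) = 1/4 := by
  simp only [prod2, aVec, ← Complex.ofReal_mul, Complex.star_def, Complex.conj_ofReal]
  norm_cast
  rw [rr4]; norm_num

lemma ρmarg_apply (p : ℝ) (x y : Fin 2 × Fin 2) :
    ρmarg p x y = (p:ℂ) * ((if x = (0,0) then 1 else 0) * (if y = (0,0) then 1 else 0))
      + (1-(p:ℂ))/4 := by
  simp only [ρmarg, Matrix.add_apply, Matrix.smul_apply, projV, prod2_e0, prod2_a_mul,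
    apply_ite (star : ℂ → ℂ), star_one, star_zero, Complex.real_smul]
  push_cast
  ring

lemma ρglob_apply (p : ℝ) (x y : Fin 2 × Fin 2 × Fin 2) :
    ρglob p x y = (p:ℂ) * ((if x = (0,0,0) then 1 else 0) * (if y = (0,0,0) then 1 else 0))
      + (1-(p:ℂ))/8 := by
  simp only [ρglob, Matrix.add_apply, Matrix.smul_apply, projV, prod3_e0, prod3_a_mul,
    apply_ite (star : ℂ → ℂ), star_one, star_zero, Complex.real_smul]
  push_cast
  ring

lemma projV_mulVec {ι : Type*} [Fintype ι] (v x : ι → ℂ) :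
    (projV v) *ᵥ x = fun i => v i * (star v ⬝ᵥ x) := by
  funext i
  simp [mulVec, projV, dotProduct, Finset.mul_sum, mul_assoc]

lemma projV_quad {ι : Type*} [Fintype ι] (v x : ι → ℂ) :
    star x ⬝ᵥ (projV v) *ᵥ x = star (star v ⬝ᵥ x) * (star v ⬝ᵥ x) := by
  rw [projV_mulVec]
  simp only [dotProduct, star_sum, star_mul', star_star, Finset.sum_mul, Pi.star_apply]
  refine Finset.sum_congr rfl fun i _ => ?_
  simp only [Finset.sum_mul, Finset.mul_sum]
  refine Finset.sum_congr rfl fun j _ => by ring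

lemma posSemidef_combo {ι : Type*} [Fintype ι] [DecidableEq ι] (a b : ℝ)
    (ha : 0 ≤ a) (hb : 0 ≤ b) (u v : ι → ℂ) :
    (a • projV u + b • projV v : Matrix ι ι ℂ).PosSemidef := by
  refine posSemidef_iff_dotProduct_mulVec.mpr ⟨?_, ?_⟩
  · ext i j
    simp only [conjTranspose_apply, Matrix.add_apply, Matrix.smul_apply, projV, star_add,
      star_smul, star_mul', star_star, star_trivial, Complex.real_smul, Complex.star_def,
      Complex.conj_ofReal, Complex.conj_conj]
    ring
  · intro x
    rw [Matrix.add_mulVec, dotProduct_add, smul_mulVec, smul_mulVec,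
      dotProduct_smul, dotProduct_smul, projV_quad, projV_quad]
    have h1 : (0:ℂ) ≤ star (star u ⬝ᵥ x) * (star u ⬝ᵥ x) := star_mul_self_nonneg _
    have h2 : (0:ℂ) ≤ star (star v ⬝ᵥ x) * (star v ⬝ᵥ x) := star_mul_self_nonneg _
    have ha' : (0:ℂ) ≤ (a:ℂ) := by exact_mod_cast ha
    have hb' : (0:ℂ) ≤ (b:ℂ) := by exact_mod_cast hb
    rw [Complex.real_smul, Complex.real_smul]
    exact add_nonneg (mul_nonneg ha' h1) (mul_nonneg hb' h2)

noncomputable def pvec {ι : Type*} [DecidableEq ι] (y1 y2 : ι) : ι → ℂ :=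
  fun z => (if z = y1 then 1 else 0) - (if z = y2 then 1 else 0)

lemma pvec_mulVec {ι : Type*} [Fintype ι] [DecidableEq ι] (A : Matrix ι ι ℂ) (y1 y2 : ι)
    (x : ι) : (A *ᵥ pvec y1 y2) x = A x y1 - A x y2 := by
  simp [mulVec, dotProduct, pvec, mul_sub, Finset.sum_sub_distrib, mul_ite, mul_one, mul_zero,
    Finset.sum_ite_eq', Finset.mem_univ]

lemma pvec_quad {ι : Type*} [Fintype ι] [DecidableEq ι] (A : Matrix ι ι ℂ) (y1 y2 : ι) :
    star (pvec y1 y2) ⬝ᵥ A *ᵥ pvec y1 y2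
      = A y1 y1 - A y1 y2 - A y2 y1 + A y2 y2 := by
  have h : ∀ x, (A *ᵥ pvec y1 y2) x = A x y1 - A x y2 := pvec_mulVec A y1 y2
  calc star (pvec y1 y2) ⬝ᵥ A *ᵥ pvec y1 y2
      = ∑ x, star (pvec y1 y2 x) * (A x y1 - A x y2) := by
        simp only [dotProduct, Pi.star_apply]
        refine Finset.sum_congr rfl fun x _ => by rw [h x]
    _ = A y1 y1 - A y1 y2 - A y2 y1 + A y2 y2 := by
        simp only [pvec, star_sub, apply_ite (star : ℂ → ℂ), star_one, star_zero, sub_mul,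
          ite_mul, one_mul, zero_mul, Finset.sum_sub_distrib, Finset.sum_ite_eq',
          Finset.mem_univ, if_true]
        ring

lemma nonneg_add_eq_zero {a b : ℂ} (ha : 0 ≤ a) (hb : 0 ≤ b) (h : a + b = 0) :
    a = 0 ∧ b = 0 := by
  constructor
  · exact le_antisymm (by calc a ≤ a + b := le_add_of_nonneg_right hb
                           _ = 0 := h) ha
  · exact le_antisymm (by calc b ≤ a + b := le_add_of_nonneg_left ha
                           _ = 0 := h) hb

lemma rows_eq_pair {ι : Type*} [Fintype ι] [DecidableEq ι] {A : Matrix ι ι ℂ}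
    (hA : A.PosSemidef) (y1 y2 z1 z2 : ι)
    (hsum : (A y1 y1 - A y1 y2 - A y2 y1 + A y2 y2)
      + (A z1 z1 - A z1 z2 - A z2 z1 + A z2 z2) = 0) :
    (∀ x, A x y1 = A x y2) ∧ (∀ x, A x z1 = A x z2) := by
  have hq1 := (pvec_quad A y1 y2).symm
  have hq2 := (pvec_quad A z1 z2).symm
  have hnn1 : (0:ℂ) ≤ A y1 y1 - A y1 y2 - A y2 y1 + A y2 y2 := hq1 ▸ hA.dotProduct_mulVec_nonneg (pvec y1 y2)
  have hnn2 : (0:ℂ) ≤ A z1 z1 - A z1 z2 - A z2 z1 + A z2 z2 := hq2 ▸ hA.dotProduct_mulVec_nonneg (pvec z1 z2)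
  obtain ⟨h1, h2⟩ := nonneg_add_eq_zero hnn1 hnn2 hsum
  constructor
  · intro x
    have hmv : A *ᵥ pvec y1 y2 = 0 :=
      (hA.dotProduct_mulVec_zero_iff (pvec y1 y2)).mp (by rw [pvec_quad]; exact h1)
    have := congrFun hmv x
    rw [pvec_mulVec] at this
    simp only [Pi.zero_apply] at this
    exact sub_eq_zero.mp this
  · intro x
    have hmv : A *ᵥ pvec z1 z2 = 0 :=
      (hA.dotProduct_mulVec_zero_iff (pvec z1 z2)).mp (by rw [pvec_quad]; exact h2)
    have := congrFun hmv x
    rw [pvec_mulVec] at this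
    simp only [Pi.zero_apply] at this
    exact sub_eq_zero.mp this

/-- the separable marginals ρmarg p are compatible only with the fully
separable state ρglob p. -/
theorem stmt_19 (p : ℝ) (hp : 0 < p) (hp' : p < 1) :
    IsDensity (ρglob p) ∧
    trC (ρglob p) = ρmarg p ∧ trB (ρglob p) = ρmarg p ∧ trA (ρglob p) = ρmarg p ∧
    FullySepTri (ρglob p) ∧
    ∀ τ : Tri 2 2 2, IsDensity τ →
      trC τ = ρmarg p → trB τ = ρmarg p → trA τ = ρmarg p → τ = ρglob p := by
  have hp0 : (0:ℝ) ≤ p := le_of_lt hp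
  have hp1 : (0:ℝ) ≤ 1 - p := by linarith
  refine ⟨⟨posSemidef_combo p (1-p) hp0 hp1 _ _, ?_⟩, ?_, ?_, ?_, ?_, ?_⟩
  · -- trace
    show (∑ x : Fin 2 × Fin 2 × Fin 2, ρglob p x x) = 1
    simp only [ρglob_apply, Fintype.sum_prod_type, Fin.sum_univ_two]
    norm_num [Prod.ext_iff]
    ring
  · -- trC
    ext x y
    obtain ⟨i,j⟩ := x; obtain ⟨k,l⟩ := y
    simp only [trC, ρglob_apply, ρmarg_apply, Fin.sum_univ_two]
    fin_cases i <;> fin_cases j <;> fin_cases k <;> fin_cases l <;>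
      (norm_num [Prod.ext_iff]; try ring)
  · -- trB
    ext x y
    obtain ⟨i,j⟩ := x; obtain ⟨k,l⟩ := y
    simp only [trB, ρglob_apply, ρmarg_apply, Fin.sum_univ_two]
    fin_cases i <;> fin_cases j <;> fin_cases k <;> fin_cases l <;>
      (norm_num [Prod.ext_iff]; try ring)
  · -- trA
    ext x y
    obtain ⟨i,j⟩ := x; obtain ⟨k,l⟩ := y
    simp only [trA, ρglob_apply, ρmarg_apply, Fin.sum_univ_two]
    fin_cases i <;> fin_cases j <;> fin_cases k <;> fin_cases l <;>
      (norm_num [Prod.ext_iff]; try ring)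
  · -- fully separable
    refine ⟨2, ![p, 1-p], ![e0, aVec], ![e0, aVec], ![e0, aVec], fun i => ?_, ?_⟩
    · fin_cases i <;> simp <;> linarith
    · rw [Fin.sum_univ_two]
      simp only [Matrix.cons_val_zero, Matrix.cons_val_one, Matrix.head_cons]
      rfl
  · -- uniqueness
    intro τ hτ h1 h2 h3
    have hps : τ.PosSemidef := hτ.1
    have herm : τ.IsHermitian := hps.1
    have m1 : ∀ i j k l : Fin 2, τ (i,j,0) (k,l,0) + τ (i,j,1) (k,l,1) = ρmarg p (i,j) (k,l) := by
      intro i j k l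
      have := congrFun (congrFun h1 (i,j)) (k,l)
      simpa [trC, Fin.sum_univ_two] using this
    have m2 : ∀ i j k l : Fin 2, τ (i,0,j) (k,0,l) + τ (i,1,j) (k,1,l) = ρmarg p (i,j) (k,l) := by
      intro i j k l
      have := congrFun (congrFun h2 (i,j)) (k,l)
      simpa [trB, Fin.sum_univ_two] using this
    have m3 : ∀ i j k l : Fin 2, τ (0,i,j) (0,k,l) + τ (1,i,j) (1,k,l) = ρmarg p (i,j) (k,l) := by
      intro i j k l
      have := congrFun (congrFun h3 (i,j)) (k,l)
      simpa [trA, Fin.sum_univ_two] using this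
    have F1 := rows_eq_pair hps ((0:Fin 2),(1:Fin 2),(0:Fin 2)) (1,0,0) (0,1,1) (1,0,1) (by
      have a1 := m1 0 1 0 1; have a2 := m1 0 1 1 0
      have a3 := m1 1 0 0 1; have a4 := m1 1 0 1 0
      rw [ρmarg_apply] at a1 a2 a3 a4
      norm_num [Prod.ext_iff, -Prod.mk_zero_zero, -Prod.mk_one_one] at a1 a2 a3 a4
      linear_combination a1 - a2 - a3 + a4)
    have F2 := rows_eq_pair hps ((0:Fin 2),(1:Fin 2),(0:Fin 2)) (1,1,0) (0,1,1) (1,1,1) (by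
      have a1 := m1 0 1 0 1; have a2 := m1 0 1 1 1
      have a3 := m1 1 1 0 1; have a4 := m1 1 1 1 1
      rw [ρmarg_apply] at a1 a2 a3 a4
      norm_num [Prod.ext_iff, -Prod.mk_zero_zero, -Prod.mk_one_one] at a1 a2 a3 a4
      linear_combination a1 - a2 - a3 + a4)
    have F5 := rows_eq_pair hps ((0:Fin 2),(0:Fin 2),(1:Fin 2)) (0,1,0) (1,0,1) (1,1,0) (by
      have a1 := m3 0 1 0 1; have a2 := m3 0 1 1 0
      have a3 := m3 1 0 0 1; have a4 := m3 1 0 1 0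
      rw [ρmarg_apply] at a1 a2 a3 a4
      norm_num [Prod.ext_iff, -Prod.mk_zero_zero, -Prod.mk_one_one] at a1 a2 a3 a4
      linear_combination a1 - a2 - a3 + a4)
    have F6 := rows_eq_pair hps ((0:Fin 2),(0:Fin 2),(1:Fin 2)) (0,1,1) (1,0,1) (1,1,1) (by
      have a1 := m3 0 1 0 1; have a2 := m3 0 1 1 1
      have a3 := m3 1 1 0 1; have a4 := m3 1 1 1 1
      rw [ρmarg_apply] at a1 a2 a3 a4
      norm_num [Prod.ext_iff, -Prod.mk_zero_zero, -Prod.mk_one_one] at a1 a2 a3 a4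
      linear_combination a1 - a2 - a3 + a4)
    have rowEq : ∀ x y : Fin 2 × Fin 2 × Fin 2, y ≠ (0,0,0) → τ x y = τ x (1,1,1) := by
      intro x y hy
      have h011 : τ x (0,1,1) = τ x (1,1,1) := F2.2 x
      have h001 : τ x (0,0,1) = τ x (1,1,1) := (F6.1 x).trans h011
      have h101 : τ x (1,0,1) = τ x (1,1,1) := F6.2 x
      have h010 : τ x (0,1,0) = τ x (1,1,1) := (F5.1 x).symm.trans h001
      have h110 : τ x (1,1,0) = τ x (1,1,1) := (F2.1 x).symm.trans h010
      have h100 : τ x (1,0,0) = τ x (1,1,1) := (F1.1 x).symm.trans h010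
      obtain ⟨a,b,c⟩ := y
      fin_cases a <;> fin_cases b <;> fin_cases c
      · simp at hy
      · exact h001
      · exact h010
      · exact h011
      · exact h100
      · exact h101
      · exact h110
      · rfl
    have colEq : ∀ x y : Fin 2 × Fin 2 × Fin 2, y ≠ (0,0,0) → τ y x = τ (1,1,1) x := by
      intro x y hy
      calc τ y x = star (τ x y) := (herm.apply y x).symm
        _ = star (τ x (1,1,1)) := by rw [rowEq x y hy]
        _ = τ (1,1,1) x := herm.apply (1,1,1) x
    have e110 : τ (1,1,0) (1,1,0) = τ (1,1,1) (1,1,1) :=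
      (rowEq (1,1,0) (1,1,0) (by decide)).trans (colEq (1,1,1) (1,1,0) (by decide))
    have ht : τ (1,1,1) (1,1,1) = (1-(p:ℂ))/8 := by
      have a := m1 1 1 1 1
      rw [ρmarg_apply] at a
      norm_num [Prod.ext_iff, -Prod.mk_zero_zero, -Prod.mk_one_one] at a
      rw [e110] at a
      linear_combination a/2
    have hu : τ (0,0,0) (1,1,1) = (1-(p:ℂ))/8 := by
      have a := m1 0 0 1 1
      rw [ρmarg_apply] at a
      norm_num [Prod.ext_iff, -Prod.mk_zero_zero, -Prod.mk_one_one] at a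
      rw [rowEq (0,0,0) (1,1,0) (by decide), colEq (1,1,1) (0,0,1) (by decide), ht] at a
      linear_combination a
    have hw : τ (1,1,1) (0,0,0) = (1-(p:ℂ))/8 := by
      have hh := herm.apply (1,1,1) (0,0,0)
      rw [hu] at hh
      rw [← hh]
      simp [Complex.star_def, map_div₀, map_sub, _root_.map_one, Complex.conj_ofReal]
    have hs : τ (0,0,0) (0,0,0) = (p:ℂ) + (1-(p:ℂ))/8 := by
      have a := m1 0 0 0 0
      rw [ρmarg_apply] at a
      norm_num [Prod.ext_iff, -Prod.mk_zero_zero, -Prod.mk_one_one] at a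
      rw [rowEq (0,0,1) (0,0,1) (by decide), colEq (1,1,1) (0,0,1) (by decide), ht] at a
      linear_combination a
    ext x y
    rcases eq_or_ne x ((0:Fin 2),(0:Fin 2),(0:Fin 2)) with hx | hx <;>
      rcases eq_or_ne y ((0:Fin 2),(0:Fin 2),(0:Fin 2)) with hy | hy
    · subst hx; subst hy
      rw [hs, ρglob_apply]
      norm_num
    · subst hx
      rw [rowEq _ _ hy, hu, ρglob_apply, if_neg hy]
      norm_num
    · subst hy
      rw [colEq _ _ hx, hw, ρglob_apply, if_neg hx]
      norm_num
    · rw [rowEq _ _ hy, colEq _ _ hx, ht, ρglob_apply, if_neg hx]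
      norm_num
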